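/- Let F be a finitary Set endofunctor preserving finite sets, I finite. Then for any two automata A_t and A over F (with input I, output O), the languages L_{A_t}, L_A : TI → O are equal if and only if for every recursive coalgebra ρ : S → F_I S with S finite, the ρ-restricted languages agree: o_t ∘ [i_t, δ_t]^ρ = o ∘ [i, δ]^ρ. -/

import Mathlib

open CategoryTheory

universe u

/-- Recursiveness of a coalgebra `ρ : S → I ⊕ F S` for the functor `F_I X = I ⊕ F X` on `Set`. -/
def RecursiveSet (F : Type u ⥤ Type u) (I : Type u) {S : Type u}
    (ρ : S → I ⊕ F.obj S) : Prop :=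
  ∀ (X : Type u) (x : I ⊕ F.obj X → X),
    ∃! f : S → X, ∀ s, f s = x (Sum.map id (F.map (TypeCat.ofHom f)) (ρ s))

namespace Stmt13Aux

open CategoryTheory Limits

variable (F : Type u ⥤ Type u) (I : Type u)

/-- The initial chain `S_0 = ∅`, `S_{n+1} = I ⊕ F S_n`. -/
def chainObj : ℕ → Type u
  | 0 => PEmpty
  | n + 1 => I ⊕ F.obj (chainObj n)

/-- Connecting maps of the chain, which are simultaneously coalgebras
`S_n → I ⊕ F S_n`. -/
def chainMap : (n : ℕ) → chainObj F I n → chainObj F I (n + 1)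
  | 0 => fun s => s.elim
  | n + 1 => Sum.map id (F.map (TypeCat.ofHom (chainMap n)))

variable {F I}

lemma map_map {A B C : Type u} (f : A → B) (g : B → C) (w : F.obj A) :
    F.map (TypeCat.ofHom g) (F.map (TypeCat.ofHom f) w) = F.map (TypeCat.ofHom (fun x => g (f x))) w := by
  rw [← FunctorToTypes.map_comp_apply]; rfl

lemma sum_map_map {A B C : Type u} (f : A → B) (g : B → C) (z : I ⊕ F.obj A) :
    Sum.map id (F.map (TypeCat.ofHom g)) (Sum.map id (F.map (TypeCat.ofHom f)) z) =
      Sum.map id (F.map (TypeCat.ofHom fun a => g (f a))) z := by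
  cases z with
  | inl i => rfl
  | inr w => exact congrArg Sum.inr (map_map f g w)

/-- Coalgebra-to-algebra solutions out of the chain. -/
def sol {X : Type u} (x : I ⊕ F.obj X → X) : (n : ℕ) → chainObj F I n → X
  | 0 => fun s => s.elim
  | n + 1 => fun s => x (Sum.map id (F.map (TypeCat.ofHom (sol x n))) s)

lemma sol_comp {X : Type u} (x : I ⊕ F.obj X → X) :
    ∀ n (s : chainObj F I n), sol x (n + 1) (chainMap F I n s) = sol x n s
  | 0, s => s.elim
  | n + 1, s => by
    show x (Sum.map id (F.map (TypeCat.ofHom (sol x (n + 1))))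
        (Sum.map id (F.map (TypeCat.ofHom (chainMap F I n))) s)) = x (Sum.map id (F.map (TypeCat.ofHom (sol x n))) s)
    rw [sum_map_map (z := s)]
    exact congrArg (fun φ : chainObj F I n → X => x (Sum.map id (F.map (TypeCat.ofHom φ)) s))
      (funext (sol_comp x n))

lemma sol_spec {X : Type u} (x : I ⊕ F.obj X → X) (n : ℕ) (s : chainObj F I n) :
    sol x n s = x (Sum.map id (F.map (TypeCat.ofHom (sol x n))) (chainMap F I n s)) :=
  (sol_comp x n s).symm

lemma sol_unique {X : Type u} (x : I ⊕ F.obj X → X) :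
    ∀ n (f : chainObj F I n → X),
      (∀ s, f s = x (Sum.map id (F.map (TypeCat.ofHom f)) (chainMap F I n s))) →
        ∀ s, f s = sol x n s
  | 0, _, _, s => s.elim
  | n + 1, f, hf, s => by
    have hstep : ∀ s, f (chainMap F I n s) = sol x n s := by
      apply sol_unique x n
      intro s
      rw [hf (chainMap F I n s)]
      exact congrArg x (sum_map_map (chainMap F I n) f (chainMap F I n s))
    rw [hf s]
    show x (Sum.map id (F.map (TypeCat.ofHom f)) (Sum.map id (F.map (TypeCat.ofHom (chainMap F I n))) s)) =
      x (Sum.map id (F.map (TypeCat.ofHom (sol x n))) s)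
    rw [sum_map_map (z := s)]
    exact congrArg (fun φ : chainObj F I n → X => x (Sum.map id (F.map (TypeCat.ofHom φ)) s))
      (funext hstep)

lemma chain_finite (hI : Finite I)
    (hF : ∀ X : Type u, Finite X → Finite (F.obj X)) :
    ∀ n, Finite (chainObj F I n)
  | 0 => by show Finite PEmpty; infer_instance
  | n + 1 => by
    haveI := chain_finite hI hF n
    haveI := hF _ (chain_finite hI hF n)
    haveI := hI
    show Finite (I ⊕ F.obj (chainObj F I n))
    infer_instance

lemma chain_recursive (n : ℕ) : RecursiveSet F I (chainMap F I n) := by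
  intro X x
  exact ⟨sol x n, fun s => sol_spec x n s, fun f hf => funext (sol_unique x n f hf)⟩

lemma sol_comp_alg {X B : Type u} (x : I ⊕ F.obj X → X) (b : I ⊕ F.obj B → B)
    (m : X → B) (hm : ∀ y, m (x y) = b (Sum.map id (F.map (TypeCat.ofHom m)) y)) (n : ℕ)
    (s : chainObj F I n) :
    m (sol x n s) = b (Sum.map id (F.map (TypeCat.ofHom fun t => m (sol x n t))) (chainMap F I n s)) := by
  rw [sol_spec x n s, hm]
  exact congrArg b (sum_map_map (sol x n) m (chainMap F I n s))

end Stmt13Aux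

open Stmt13Aux Limits in
/-- Every element of the initial algebra is reached by some stage of the chain. -/
lemma Stmt13Aux.sol_surjective (F : Type u ⥤ Type u)
    [Limits.PreservesFilteredColimits F]
    (I : Type u) (TI : Type u) (a : I ⊕ F.obj TI → TI)
    (hinit : ∀ (X : Type u) (x : I ⊕ F.obj X → X),
      ∃! h : TI → X, ∀ y, h (a y) = x (Sum.map id (F.map (TypeCat.ofHom h)) y))
    (t : TI) : ∃ n s, sol (F := F) (I := I) a n s = t := by
  classical
  let G : ℕ ⥤ Type u := Functor.ofSequence (fun n => TypeCat.ofHom (chainMap F I n))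
  let cTI : Cocone G :=
    { pt := TI
      ι := NatTrans.ofSequence (F := G) (G := (Functor.const ℕ).obj TI)
          (app := fun n => TypeCat.ofHom (sol a n))
          (naturality := by
            intro n
            rw [Functor.ofSequence_map_homOfLE_succ]
            ext s
            exact sol_comp a n s) }
  let c0 := Types.colimitCocone G
  let hc0 := Types.colimitCoconeIsColimit G
  let p : c0.pt → TI := hc0.desc cTI
  have hp : ∀ n s, p (c0.ι.app n s) = sol a n s := fun n s =>
    congrArg (fun φ => φ s) (hc0.fac cTI n)
  haveI := preservesSmallestFilteredColimits_of_preservesFilteredColimits F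
  have hFc : IsColimit (F.mapCocone c0) := isColimitOfPreserves F hc0
  set U : Set TI := Set.range p with hU
  have hmemU : ∀ n s, sol (F := F) (I := I) a n s ∈ U := fun n s => ⟨c0.ι.app n s, hp n s⟩
  have hstep : ∀ z : I ⊕ F.obj U,
      a (Sum.map id (F.map (TypeCat.ofHom (Subtype.val : U → TI))) z) ∈ U := by
    rintro (i | w)
    · exact hmemU 1 (Sum.inl i)
    · let r : c0.pt → U := fun z => ⟨p z, Set.mem_range_self z⟩
      have hr : Function.Surjective r := by
        rintro ⟨t, z, rfl⟩
        exact ⟨z, rfl⟩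
      have hFr : Function.Surjective (F.map (TypeCat.ofHom r)) := by
        intro w
        refine ⟨F.map (TypeCat.ofHom (Function.surjInv hr)) w, ?_⟩
        rw [map_map]
        have h1 : (fun x => r (Function.surjInv hr x)) = id :=
          funext fun x => Function.surjInv_eq hr x
        rw [h1]
        exact FunctorToTypes.map_id_apply F w
      obtain ⟨w0, hw0⟩ := hFr w
      obtain ⟨n, v, hv⟩ := Types.jointly_surjective (G ⋙ F) hFc w0
      have h1 : F.map (TypeCat.ofHom (Subtype.val : U → TI)) w = F.map (TypeCat.ofHom (sol a n)) v := by
        rw [← hw0, map_map, ← hv, Functor.mapCocone_ι_app, ← Functor.map_comp_apply]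
        exact congrArg (fun φ : chainObj F I n → TI => F.map (TypeCat.ofHom φ) v)
          (funext fun s => hp n s)
      show a (Sum.inr (F.map (TypeCat.ofHom (Subtype.val : U → TI)) w)) ∈ U
      rw [h1]
      exact hmemU (n + 1) (Sum.inr v)
  obtain ⟨h, hh, -⟩ := hinit (↥U)
    (fun z => ⟨a (Sum.map id (F.map (TypeCat.ofHom (Subtype.val : U → TI))) z), hstep z⟩)
  obtain ⟨idm, -, hiduniq⟩ := hinit TI a
  have hvalh : ∀ y, (fun t => (h t).1) (a y) =
      a (Sum.map id (F.map (TypeCat.ofHom fun t => (h t).1)) y) := by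
    intro y
    have h2 := congrArg Subtype.val (hh y)
    rw [show (fun t => (h t).1) (a y) = (h (a y)).1 from rfl, h2]
    exact congrArg a (sum_map_map h Subtype.val y)
  have hid2 : ∀ y, (id : TI → TI) (a y) =
      a (Sum.map id (F.map (TypeCat.ofHom (id : TI → TI))) y) := by
    intro y
    show a y = a (Sum.map id (F.map (𝟙 TI)) y)
    rw [F.map_id]
    cases y with
    | inl i => rfl
    | inr w => rfl
  have hmain : (fun t => (h t).1) = (id : TI → TI) :=
    (hiduniq _ hvalh).trans (hiduniq _ hid2).symm
  have htU : t ∈ U := by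
    have h3 := (h t).2
    rw [congrFun hmain t] at h3
    exact h3
  obtain ⟨z, hz⟩ := htU
  obtain ⟨n, s, hs⟩ := Types.jointly_surjective G hc0 z
  exact ⟨n, s, by rw [← hz, ← hs]; exact (hp n s).symm⟩

open Stmt13Aux in
/-- Language equivalence via finite recursion: for a finitary `Set` functor `F` preserving
finite sets and finite `I`, two automata have equal languages `TI → O` iff their
`ρ`-restricted languages agree for every recursive coalgebra `ρ : S → F_I S` with `S` finite.
Here `TI` is the initial `F_I`-algebra with structure `a`, and the reachability maps are the
unique `F_I`-algebra morphisms out of it. -/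
theorem stmt13 (F : Type u ⥤ Type u)
    [Limits.PreservesFilteredColimits F]
    (hFfin : ∀ X : Type u, Finite X → Finite (F.obj X))
    (I : Type u) (hI : Finite I) (O : Type u)
    (TI : Type u) (a : I ⊕ F.obj TI → TI)
    (hinit : ∀ (X : Type u) (x : I ⊕ F.obj X → X),
      ∃! h : TI → X, ∀ y, h (a y) = x (Sum.map id (F.map (TypeCat.ofHom h)) y))
    (Qt : Type u) (δt : F.obj Qt → Qt) (it : I → Qt) (ot : Qt → O)
    (Q : Type u) (δ : F.obj Q → Q) (i : I → Q) (o : Q → O)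
    (reacht : TI → Qt)
    (hreacht : ∀ y, reacht (a y) = Sum.elim it δt (Sum.map id (F.map (TypeCat.ofHom reacht)) y))
    (reach : TI → Q)
    (hreach : ∀ y, reach (a y) = Sum.elim i δ (Sum.map id (F.map (TypeCat.ofHom reach)) y)) :
    (∀ t, ot (reacht t) = o (reach t)) ↔
      ∀ (S : Type u), Finite S → ∀ ρ : S → I ⊕ F.obj S, RecursiveSet F I ρ →
        ∀ (f : S → Qt) (g : S → Q),
          (∀ s, f s = Sum.elim it δt (Sum.map id (F.map (TypeCat.ofHom f)) (ρ s))) →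
          (∀ s, g s = Sum.elim i δ (Sum.map id (F.map (TypeCat.ofHom g)) (ρ s))) →
          ∀ s, ot (f s) = o (g s) := by
  constructor
  · intro hL S _ ρ hρ f g hf hg s
    obtain ⟨e, he, -⟩ := hρ TI a
    obtain ⟨ft, -, huft⟩ := hρ Qt (Sum.elim it δt)
    obtain ⟨fo, -, hufo⟩ := hρ Q (Sum.elim i δ)
    have hft1 : f = ft := huft f hf
    have hfo1 : g = fo := hufo g hg
    have hft2 : (fun s => reacht (e s)) = ft := by
      apply huft
      intro s
      rw [he s, hreacht]
      exact congrArg (Sum.elim it δt) (sum_map_map e reacht (ρ s))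
    have hfo2 : (fun s => reach (e s)) = fo := by
      apply hufo
      intro s
      rw [he s, hreach]
      exact congrArg (Sum.elim i δ) (sum_map_map e reach (ρ s))
    rw [hft1, ← hft2, hfo1, ← hfo2]
    exact hL (e s)
  · intro hR t
    obtain ⟨n, s, rfl⟩ := sol_surjective F I TI a hinit t
    exact hR (chainObj F I n) (chain_finite hI hFfin n) (chainMap F I n)
      (chain_recursive n)
      (fun t => reacht (sol a n t)) (fun t => reach (sol a n t))
      (fun s => sol_comp_alg a (Sum.elim it δt) reacht hreacht n s)
      (fun s => sol_comp_alg a (Sum.elim i δ) reach hreach n s) s
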